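/- Let (Θ̂₁,…,Θ̂_T) be any tuple of p×p real matrices. Suppose there exist p×p real matrices Ẽ₁,…,Ẽ_T such that: Ẽ₁ = 0; for each 2 ≤ t ≤ T, if Θ̂_t ≠ Θ̂_{t−1} then Ẽ_t = (Θ̂_t − Θ̂_{t−1})/‖Θ̂_t − Θ̂_{t−1}‖_F, and if Θ̂_t = Θ̂_{t−1} then ‖Ẽ_t‖_F ≤ 1; and for every 1 ≤ t ≤ T, (1/T)·∑_{r=t}^{T} (Θ̂_r − X_r X_rᵀ) + λ·Ẽ_t = 0. Then G(Θ̂₁,…,Θ̂_T) ≤ G(Θ₁,…,Θ_T) for every tuple (Θ₁,…,Θ_T) of p×p real matrices; that is, (Θ̂_t) is a global minimizer of G. -/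

import Mathlib

open Matrix Finset

/-- Frobenius norm of a real `p × p` matrix. -/
noncomputable def frob {p : ℕ} (A : Matrix (Fin p) (Fin p) ℝ) : ℝ :=
  Real.sqrt (∑ u, ∑ v, (A u v) ^ 2)

/-- The Group Fused least-squares LASSO (GFlsL) objective, with time indices `t = 1, …, T`. -/
noncomputable def gflsl (p T : ℕ) (X : ℕ → Fin p → ℝ) (lam : ℝ)
    (Θ : ℕ → Matrix (Fin p) (Fin p) ℝ) : ℝ :=
  (1 / (2 * (T : ℝ))) *
      ∑ t ∈ Finset.Icc 1 T,
        ((Θ t)ᵀ * Θ t - (Matrix.vecMulVec (X t) (X t))ᵀ * Θ t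
          - (Θ t)ᵀ * Matrix.vecMulVec (X t) (X t)).trace
    + lam * ∑ t ∈ Finset.Icc 2 T, frob (Θ t - Θ (t - 1))

namespace St1

variable {p : ℕ}

def ip (A B : Matrix (Fin p) (Fin p) ℝ) : ℝ := ∑ u, ∑ v, A u v * B u v

lemma ip_comm (A B : Matrix (Fin p) (Fin p) ℝ) : ip A B = ip B A := by
  simp [ip, mul_comm]

lemma ip_sub_left (A B C : Matrix (Fin p) (Fin p) ℝ) :
    ip (A - B) C = ip A C - ip B C := by
  simp [ip, Matrix.sub_apply, sub_mul, Finset.sum_sub_distrib]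

lemma ip_sub_right (A B C : Matrix (Fin p) (Fin p) ℝ) :
    ip A (B - C) = ip A B - ip A C := by
  simp [ip, Matrix.sub_apply, mul_sub, Finset.sum_sub_distrib]

lemma ip_smul_left (c : ℝ) (A B : Matrix (Fin p) (Fin p) ℝ) :
    ip (c • A) B = c * ip A B := by
  simp [ip, Matrix.smul_apply, Finset.mul_sum, mul_assoc]

lemma ip_zero_left (B : Matrix (Fin p) (Fin p) ℝ) : ip 0 B = 0 := by
  simp [ip]

lemma ip_neg_left (A B : Matrix (Fin p) (Fin p) ℝ) : ip (-A) B = -ip A B := by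
  simp [ip, Finset.sum_neg_distrib]

lemma ip_self_nonneg (A : Matrix (Fin p) (Fin p) ℝ) : 0 ≤ ip A A := by
  apply Finset.sum_nonneg; intro u _
  apply Finset.sum_nonneg; intro v _
  exact mul_self_nonneg _

lemma frob_eq (A : Matrix (Fin p) (Fin p) ℝ) : frob A = Real.sqrt (ip A A) := by
  simp [frob, ip, sq]

lemma frob_nonneg (A : Matrix (Fin p) (Fin p) ℝ) : 0 ≤ frob A :=
  Real.sqrt_nonneg _

lemma frob_sq (A : Matrix (Fin p) (Fin p) ℝ) : frob A ^ 2 = ip A A := by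
  rw [frob_eq, Real.sq_sqrt (ip_self_nonneg A)]

lemma frob_zero : frob (0 : Matrix (Fin p) (Fin p) ℝ) = 0 := by
  simp [frob]

lemma frob_pos {A : Matrix (Fin p) (Fin p) ℝ} (h : A ≠ 0) : 0 < frob A := by
  rcases (frob_nonneg A).lt_or_eq with h' | h'
  · exact h'
  · exfalso
    apply h
    have h2 : ip A A = 0 := by
      rw [← frob_sq A, ← h']; ring
    ext u v
    have hu : ∑ v, A u v * A u v = 0 := by
      have := (Finset.sum_eq_zero_iff_of_nonneg (fun u _ => Finset.sum_nonneg
        (fun v _ => mul_self_nonneg (A u v)))).1 h2 u (Finset.mem_univ u)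
      exact this
    have := (Finset.sum_eq_zero_iff_of_nonneg (fun v _ => mul_self_nonneg (A u v))).1 hu v
      (Finset.mem_univ v)
    have := mul_self_eq_zero.mp this
    simpa using this

lemma cs (A B : Matrix (Fin p) (Fin p) ℝ) : ip A B ≤ frob A * frob B := by
  have h1 : ip A B ≤ Real.sqrt ((ip A B) ^ 2) := by
    rw [Real.sqrt_sq_eq_abs]; exact le_abs_self _
  have h2 : (ip A B) ^ 2 ≤ ip A A * ip B B := by
    have key : (∑ x : Fin p × Fin p, A x.1 x.2 * B x.1 x.2) ^ 2 ≤
        (∑ x : Fin p × Fin p, A x.1 x.2 ^ 2) * (∑ x : Fin p × Fin p, B x.1 x.2 ^ 2) := by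
      have := Finset.sum_mul_sq_le_sq_mul_sq (Finset.univ : Finset (Fin p × Fin p))
        (fun x => A x.1 x.2) (fun x => B x.1 x.2)
      simpa [sq] using this
    have e1 : ip A B = ∑ x : Fin p × Fin p, A x.1 x.2 * B x.1 x.2 := by
      rw [ip]
      exact (Fintype.sum_prod_type (fun x : Fin p × Fin p => A x.1 x.2 * B x.1 x.2)).symm
    have e2 : ip A A = ∑ x : Fin p × Fin p, A x.1 x.2 ^ 2 := by
      rw [ip]
      rw [show (∑ x : Fin p × Fin p, A x.1 x.2 ^ 2)
          = ∑ x : Fin p, ∑ y : Fin p, A x y ^ 2 from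
        Fintype.sum_prod_type (fun x : Fin p × Fin p => A x.1 x.2 ^ 2)]
      simp [sq]
    have e3 : ip B B = ∑ x : Fin p × Fin p, B x.1 x.2 ^ 2 := by
      rw [ip]
      rw [show (∑ x : Fin p × Fin p, B x.1 x.2 ^ 2)
          = ∑ x : Fin p, ∑ y : Fin p, B x y ^ 2 from
        Fintype.sum_prod_type (fun x : Fin p × Fin p => B x.1 x.2 ^ 2)]
      simp [sq]
    rw [e1, e2, e3]; exact key
  calc ip A B ≤ Real.sqrt ((ip A B) ^ 2) := h1
    _ ≤ Real.sqrt (ip A A * ip B B) := Real.sqrt_le_sqrt h2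
    _ = Real.sqrt (ip A A) * Real.sqrt (ip B B) :=
        Real.sqrt_mul (ip_self_nonneg A) _
    _ = frob A * frob B := by rw [frob_eq, frob_eq]

/-- Subgradient inequality for the Frobenius norm. -/
lemma subgrad (Dh D F : Matrix (Fin p) (Fin p) ℝ)
    (h1 : Dh ≠ 0 → F = (frob Dh)⁻¹ • Dh) (h2 : Dh = 0 → frob F ≤ 1) :
    frob Dh + ip F (D - Dh) ≤ frob D := by
  by_cases hD : Dh = 0
  · subst hD
    have h := h2 rfl
    have := cs F D
    have hfD := frob_nonneg D
    have hfF := frob_nonneg F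
    simp only [sub_zero, frob_zero, zero_add]
    nlinarith
  · have hpos := frob_pos hD
    rw [h1 hD, ip_smul_left, ip_sub_right]
    have hDD : ip Dh Dh = frob Dh ^ 2 := (frob_sq Dh).symm
    have hcs := cs Dh D
    have : (frob Dh)⁻¹ * (ip Dh D - ip Dh Dh) =
        (frob Dh)⁻¹ * ip Dh D - frob Dh := by
      rw [hDD]; field_simp
    rw [this]
    have : (frob Dh)⁻¹ * ip Dh D ≤ frob D := by
      rw [inv_mul_le_iff₀ hpos]
      exact hcs
    linarith

lemma trace_eq (S Θ : Matrix (Fin p) (Fin p) ℝ) :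
    (Θᵀ * Θ - Sᵀ * Θ - Θᵀ * S).trace = ip Θ Θ - 2 * ip S Θ := by
  have key : ∀ A B : Matrix (Fin p) (Fin p) ℝ, (Aᵀ * B).trace = ip A B := by
    intro A B
    rw [Matrix.trace, ip]
    simp only [Matrix.diag_apply, Matrix.mul_apply, Matrix.transpose_apply]
    rw [Finset.sum_comm]
  rw [Matrix.trace_sub, Matrix.trace_sub, key, key]
  have : (Θᵀ * S).trace = ip S Θ := by
    have : (Θᵀ * S).trace = ip Θ S := key Θ S
    rw [this, ip_comm]
  rw [this]; ring

end St1

/-- if a tuple satisfies the subgradient (KKT) conditions, then it is a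
global minimizer of the GFlsL objective over all tuples of `p × p` real matrices. -/
theorem stmt1 (p T : ℕ) (hp : 1 ≤ p) (hT : 1 ≤ T)
    (X : ℕ → Fin p → ℝ) (lam : ℝ) (hlam : 0 < lam)
    (Θhat : ℕ → Matrix (Fin p) (Fin p) ℝ)
    (E : ℕ → Matrix (Fin p) (Fin p) ℝ)
    (hE1 : E 1 = 0)
    (hE : ∀ t ∈ Finset.Icc 2 T,
      (Θhat t ≠ Θhat (t - 1) →
        E t = (frob (Θhat t - Θhat (t - 1)))⁻¹ • (Θhat t - Θhat (t - 1))) ∧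
      (Θhat t = Θhat (t - 1) → frob (E t) ≤ 1))
    (hstat : ∀ t ∈ Finset.Icc 1 T,
      (1 / (T : ℝ)) • (∑ r ∈ Finset.Icc t T,
          (Θhat r - Matrix.vecMulVec (X r) (X r))) + lam • E t = 0) :
    ∀ Θ : ℕ → Matrix (Fin p) (Fin p) ℝ,
      gflsl p T X lam Θhat ≤ gflsl p T X lam Θ := by
  intro Θ
  classical
  open St1 in
  simp only [gflsl]
  set S : ℕ → Matrix (Fin p) (Fin p) ℝ := fun t => Matrix.vecMulVec (X t) (X t) with hS
  set Δ : ℕ → Matrix (Fin p) (Fin p) ℝ := fun t => Θ t - Θhat t with hΔ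
  set N : ℕ → Matrix (Fin p) (Fin p) ℝ := fun t => ∑ r ∈ Finset.Icc t T, (Θhat r - S r) with hN
  have hT0 : (0:ℝ) < (T:ℝ) := by exact_mod_cast Nat.pos_of_ne_zero (by omega)
  set A : ℝ := ∑ t ∈ Finset.Icc 1 T, (1/(T:ℝ)) * St1.ip (Θhat t - S t) (Δ t) with hA0
  set B : ℝ := ∑ t ∈ Finset.Icc 2 T, lam * St1.ip (E t) (Δ t - Δ (t-1)) with hB0
  -- Step 1: quadratic part, termwise
  have quadstep : ∀ t ∈ Finset.Icc 1 T,
      (1/(2*(T:ℝ))) * ((Θhat t)ᵀ * Θhat t - (S t)ᵀ * Θhat t - (Θhat t)ᵀ * S t).trace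
        + (1/(T:ℝ)) * St1.ip (Θhat t - S t) (Δ t)
      ≤ (1/(2*(T:ℝ))) * ((Θ t)ᵀ * Θ t - (S t)ᵀ * Θ t - (Θ t)ᵀ * S t).trace := by
    intro t _
    rw [St1.trace_eq, St1.trace_eq]
    have h0 : 0 ≤ St1.ip (Δ t) (Δ t) := St1.ip_self_nonneg _
    have e1 : St1.ip (Δ t) (Δ t)
        = St1.ip (Θ t) (Θ t) - 2 * St1.ip (Θhat t) (Θ t) + St1.ip (Θhat t) (Θhat t) := by
      simp only [hΔ]
      rw [St1.ip_sub_left, St1.ip_sub_right, St1.ip_sub_right, St1.ip_comm (Θ t) (Θhat t)]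
      ring
    have e2 : St1.ip (Θhat t - S t) (Δ t)
        = St1.ip (Θhat t) (Θ t) - St1.ip (Θhat t) (Θhat t)
          - St1.ip (S t) (Θ t) + St1.ip (S t) (Θhat t) := by
      simp only [hΔ]
      rw [St1.ip_sub_left, St1.ip_sub_right, St1.ip_sub_right]
      ring
    rw [e2]
    rw [e1] at h0
    have hc : (0:ℝ) ≤ 1/(2*(T:ℝ)) := by positivity
    have := mul_nonneg hc h0
    have hhalf : (1/(T:ℝ)) = 2 * (1/(2*(T:ℝ))) := by field_simp
    rw [hhalf]
    nlinarith [this]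
  have hq : (1/(2*(T:ℝ))) * (∑ t ∈ Finset.Icc 1 T,
        ((Θhat t)ᵀ * Θhat t - (S t)ᵀ * Θhat t - (Θhat t)ᵀ * S t).trace) + A
      ≤ (1/(2*(T:ℝ))) * (∑ t ∈ Finset.Icc 1 T,
        ((Θ t)ᵀ * Θ t - (S t)ᵀ * Θ t - (Θ t)ᵀ * S t).trace) := by
    rw [Finset.mul_sum, Finset.mul_sum, hA0, ← Finset.sum_add_distrib]
    exact Finset.sum_le_sum quadstep
  -- Step 2: penalty part, termwise
  have hpen : lam * (∑ t ∈ Finset.Icc 2 T, frob (Θhat t - Θhat (t-1))) + B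
      ≤ lam * (∑ t ∈ Finset.Icc 2 T, frob (Θ t - Θ (t-1))) := by
    rw [Finset.mul_sum, Finset.mul_sum, hB0, ← Finset.sum_add_distrib]
    apply Finset.sum_le_sum
    intro t ht
    have hsub := St1.subgrad (Θhat t - Θhat (t-1)) (Θ t - Θ (t-1)) (E t)
      (fun hne => (hE t ht).1 (fun h => hne (sub_eq_zero.mpr h)))
      (fun heq => (hE t ht).2 (sub_eq_zero.mp heq))
    have hrw : Θ t - Θ (t-1) - (Θhat t - Θhat (t-1)) = Δ t - Δ (t-1) := by
      simp only [hΔ]; abel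
    rw [hrw] at hsub
    nlinarith [hsub, hlam.le]
  -- Step 3: A + B = 0
  have hNdiff : ∀ t ∈ Finset.Icc 1 T, Θhat t - S t = N t - N (t+1) := by
    intro t ht
    simp only [Finset.mem_Icc] at ht
    have h1 : Finset.Icc t T = insert t (Finset.Ioc t T) := (Finset.Ioc_insert_left ht.2).symm
    have h2 : Finset.Icc (t+1) T = Finset.Ioc t T := Finset.Icc_add_one_left_eq_Ioc t T
    simp only [hN]
    rw [h1, h2, Finset.sum_insert Finset.left_notMem_Ioc]
    abel
  have hlamE : ∀ t ∈ Finset.Icc 1 T, ∀ C : Matrix (Fin p) (Fin p) ℝ,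
      lam * St1.ip (E t) C = -((1/(T:ℝ)) * St1.ip (N t) C) := by
    intro t ht C
    have h := hstat t ht
    have hsm : lam • E t = -((1/(T:ℝ)) • N t) := by
      have := eq_neg_of_add_eq_zero_right h
      simpa [hN] using this
    calc lam * St1.ip (E t) C = St1.ip (lam • E t) C := (St1.ip_smul_left _ _ _).symm
      _ = St1.ip (-((1/(T:ℝ)) • N t)) C := by rw [hsm]
      _ = -((1/(T:ℝ)) * St1.ip (N t) C) := by rw [St1.ip_neg_left, St1.ip_smul_left]
  set f : ℕ → ℝ := fun t => (1/(T:ℝ)) * St1.ip (N t) (Δ t) with hf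
  set g : ℕ → ℝ := fun t => (1/(T:ℝ)) * St1.ip (N (t+1)) (Δ t) with hg
  have hA : A = ∑ t ∈ Finset.Icc 1 T, (f t - g t) := by
    rw [hA0]
    refine Finset.sum_congr rfl (fun t ht => ?_)
    rw [hNdiff t ht, St1.ip_sub_left, mul_sub]
  have hB : B = ∑ t ∈ Finset.Icc 2 T, (g (t-1) - f t) := by
    rw [hB0]
    refine Finset.sum_congr rfl (fun t ht => ?_)
    have ht' : t ∈ Finset.Icc 1 T := by
      simp only [Finset.mem_Icc] at ht ⊢; omega
    rw [hlamE t ht' (Δ t - Δ (t-1)), St1.ip_sub_right]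
    have h1 : t - 1 + 1 = t := by
      simp only [Finset.mem_Icc] at ht; omega
    simp only [hf, hg, h1]
    ring
  have hinsert : Finset.Icc 1 T = insert 1 (Finset.Icc 2 T) := by
    rw [show Finset.Icc 2 T = Finset.Ioc 1 T from Finset.Icc_add_one_left_eq_Ioc 1 T]
    exact (Finset.Ioc_insert_left hT).symm
  have hAB : A + B = f 1 - g 1 + ∑ t ∈ Finset.Icc 2 T, (g (t-1) - g t) := by
    rw [hA, hB, hinsert, Finset.sum_insert (by simp)]
    have hs : ∑ t ∈ Finset.Icc 2 T, (f t - g t) + ∑ t ∈ Finset.Icc 2 T, (g (t-1) - f t)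
        = ∑ t ∈ Finset.Icc 2 T, (g (t-1) - g t) := by
      rw [← Finset.sum_add_distrib]
      exact Finset.sum_congr rfl (fun t _ => by ring)
    linarith
  have htel : ∑ t ∈ Finset.Icc 2 T, (g (t-1) - g t) = g 1 - g T := by
    rw [← Finset.Ico_add_one_right_eq_Icc, Finset.sum_Ico_eq_sum_range]
    have h2 : T + 1 - 2 = T - 1 := by omega
    rw [h2]
    have hcong : ∀ i ∈ Finset.range (T-1), g (2 + i - 1) - g (2 + i)
        = (fun j => -g (j+1)) (i+1) - (fun j => -g (j+1)) i := by
      intro i _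
      simp only
      have e1 : 2 + i - 1 = i + 1 := by omega
      have e2 : 2 + i = i + 1 + 1 := by omega
      rw [e1, e2]; ring
    rw [Finset.sum_congr rfl hcong, Finset.sum_range_sub (fun j => -g (j+1)) (T-1)]
    have e3 : T - 1 + 1 = T := by omega
    simp only [e3]
    ring
  have hf1 : f 1 = 0 := by
    have h := hlamE 1 (by simp [hT]) (Δ 1)
    rw [hE1, St1.ip_zero_left, mul_zero] at h
    simp only [hf]
    linarith
  have hgT : g T = 0 := by
    have hNT : N (T+1) = 0 := by
      simp only [hN]
      rw [Finset.Icc_eq_empty (by omega)]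
      simp
    simp only [hg, hNT, St1.ip_zero_left, mul_zero]
  have hABzero : A + B = 0 := by
    rw [hAB, htel, hf1, hgT]; ring
  linarith [hq, hpen, hABzero]
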